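/- Let h ≥ 1 and let b_1, …, b_{2h} be real numbers with 0 < |b_k| < 1 for all k, extended periodically with period 2h. If at most one index k ∈ {1, …, 2h} satisfies b_k < 0, then Q = h + Σ_{m=1}^{2h} Σ_{j=1}^{2h−1} (−1)^j Π_{i=m}^{m+j−1} b_i + h Π_{i=1}^{2h} b_i is strictly positive. -/

import Mathlib

open Finset
open scoped Classical

namespace QposAux

/-- Nested alternating expression: `T b L m = 1 - b m * (1 - b (m+1) * (...))` with `L` levels. -/
noncomputable def T (b : ℕ → ℝ) : ℕ → ℕ → ℝ
  | 0, _ => 0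
  | (L+1), m => 1 - b m * T b L (m+1)

lemma T_sum (b : ℕ → ℝ) : ∀ L m, T b L m
    = ∑ j ∈ Finset.range L, (-1 : ℝ) ^ j * ∏ i ∈ Finset.Ico m (m + j), b i := by
  intro L
  induction L with
  | zero => intro m; simp [T]
  | succ L ih =>
    intro m
    rw [Finset.sum_range_succ']
    have hterm : ∀ j : ℕ, (-1 : ℝ) ^ (j+1) * ∏ i ∈ Finset.Ico m (m + (j+1)), b i
        = -(b m * ((-1:ℝ)^j * ∏ i ∈ Finset.Ico (m+1) ((m+1) + j), b i)) := by
      intro j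
      rw [Finset.prod_eq_prod_Ico_succ_bot (by omega : m < m + (j+1))]
      have : m + (j + 1) = (m + 1) + j := by omega
      rw [this]
      ring
    rw [Finset.sum_congr rfl (fun j _ => hterm j)]
    show 1 - b m * T b L (m+1) = _
    rw [ih (m+1), Finset.sum_neg_distrib, ← Finset.mul_sum]
    simp
    ring

/-- With all entries of the window positive (and `< 1`), the nested value lies in `(0, 1]`. -/
lemma T_pos (b : ℕ → ℝ) (hb1 : ∀ k, |b k| < 1) :
    ∀ L m, (∀ r, r < L → 0 < b (m + r)) → 0 < T b (L+1) m ∧ T b (L+1) m ≤ 1 := by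
  intro L
  induction L with
  | zero => intro m _; simp [T]
  | succ L ih =>
    intro m hw
    have hbm : 0 < b m := by simpa using hw 0 (by omega)
    have hbm1 : b m < 1 := lt_of_le_of_lt (le_abs_self _) (hb1 m)
    have hIH := ih (m+1) (fun r hr => by
      have := hw (r+1) (by omega)
      have e : m + (r+1) = (m+1) + r := by omega
      rwa [e] at this)
    show 0 < 1 - b m * T b (L+1) (m+1) ∧ 1 - b m * T b (L+1) (m+1) ≤ 1
    constructor
    · nlinarith [hIH.1, hIH.2]
    · nlinarith [hIH.1, hIH.2]

/-- With exactly one negative entry, at position `t` of the window, the nested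
value lies in `(0,2)` if `t` is even and in `(-1,1)` if `t` is odd. -/
lemma T_neg (b : ℕ → ℝ) (hb1 : ∀ k, |b k| < 1) :
    ∀ L m t, t < L → b (m + t) < 0 → (∀ r, r < L → r ≠ t → 0 < b (m + r)) →
      (Even t → 0 < T b (L+1) m ∧ T b (L+1) m < 2)
      ∧ (Odd t → -1 < T b (L+1) m ∧ T b (L+1) m < 1) := by
  intro L
  induction L with
  | zero => intro m t ht; omega
  | succ L ih =>
    intro m t ht hneg hw
    show (Even t → 0 < 1 - b m * T b (L+1) (m+1) ∧ 1 - b m * T b (L+1) (m+1) < 2)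
      ∧ (Odd t → -1 < 1 - b m * T b (L+1) (m+1) ∧ 1 - b m * T b (L+1) (m+1) < 1)
    rcases Nat.eq_zero_or_pos t with ht0 | htpos
    · subst ht0
      have hbm : b m < 0 := by simpa using hneg
      have hbm1 : -1 < b m := by
        have := abs_lt.mp (hb1 m); exact this.1
      have hpos := T_pos b hb1 L (m+1) (fun r hr => by
        have := hw (r+1) (by omega) (by omega)
        have e : m + (r+1) = (m+1) + r := by omega
        rwa [e] at this)
      constructor
      · intro _
        constructor
        · nlinarith [hpos.1, hpos.2]
        · nlinarith [hpos.1, hpos.2]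
      · intro hodd
        exact absurd hodd (by simp)
    · obtain ⟨t', rfl⟩ : ∃ t', t = t' + 1 := ⟨t - 1, by omega⟩
      have hbm : 0 < b m := by simpa using hw 0 (by omega) (by omega)
      have hbm1 : b m < 1 := lt_of_le_of_lt (le_abs_self _) (hb1 m)
      have hneg' : b ((m+1) + t') < 0 := by
        have e : (m+1) + t' = m + (t'+1) := by omega
        rwa [e]
      have hIH := ih (m+1) t' (by omega) hneg' (fun r hr hrt => by
        have := hw (r+1) (by omega) (by omega)
        have e : m + (r+1) = (m+1) + r := by omega
        rwa [e] at this)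
      rcases Nat.even_or_odd t' with hev | hod
      · have hx := hIH.1 hev
        have hodd : Odd (t'+1) := Even.add_one hev
        constructor
        · intro h2
          exact absurd h2 (by simpa using hodd)
        · intro _
          constructor
          · nlinarith [hx.1, hx.2]
          · nlinarith [hx.1, hx.2]
      · have hx := hIH.2 hod
        have heven : Even (t'+1) := Odd.add_one hod
        constructor
        · intro _
          constructor
          · nlinarith [hx.1, hx.2]
          · nlinarith [hx.1, hx.2]
        · intro h2
          exact absurd h2 (by simpa [Nat.odd_iff, Nat.even_iff] using heven)

lemma bper' (b : ℕ → ℝ) (n : ℕ) (hb : ∀ i, b (i + n) = b i) :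
    ∀ q j, b (j + q * n) = b j := by
  intro q
  induction q with
  | zero => intro j; simp
  | succ q ih =>
    intro j
    have e : j + (q+1) * n = (j + q * n) + n := by ring
    rw [e, hb, ih]

lemma T_per (b : ℕ → ℝ) (n : ℕ) (hb : ∀ i, b (i + n) = b i) :
    ∀ L m, T b L (m + n) = T b L m := by
  intro L
  induction L with
  | zero => intro m; simp [T]
  | succ L ih =>
    intro m
    show 1 - b (m + n) * T b L (m + n + 1) = 1 - b m * T b L (m + 1)
    have e : m + n + 1 = (m + 1) + n := by omega
    rw [e, ih, hb]

lemma prod_window (b : ℕ → ℝ) (n : ℕ) (hb : ∀ i, b (i + n) = b i)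
    (hb0 : ∀ k, b k ≠ 0) (m : ℕ) :
    ∏ i ∈ Finset.Ico m (m + n), b i = ∏ i ∈ Finset.Ico (m + 1) ((m + 1) + n), b i := by
  have h1 : ∏ i ∈ Finset.Ico m (m + n + 1), b i
      = b m * ∏ i ∈ Finset.Ico (m + 1) (m + n + 1), b i :=
    Finset.prod_eq_prod_Ico_succ_bot (by omega) b
  have h2 : ∏ i ∈ Finset.Ico m (m + n + 1), b i
      = (∏ i ∈ Finset.Ico m (m + n), b i) * b (m + n) :=
    Finset.prod_Ico_succ_top (by omega) b
  rw [hb] at h2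
  have e : (m + 1) + n = m + n + 1 := by omega
  rw [e]
  have heq := h1.symm.trans h2
  have := hb0 m
  have : b m * ∏ i ∈ Finset.Ico (m + 1) (m + n + 1), b i
      = b m * ∏ i ∈ Finset.Ico m (m + n), b i := by linarith [heq]
  exact (mul_left_cancel₀ (hb0 m) this).symm

lemma prod_const (b : ℕ → ℝ) (n : ℕ) (hb : ∀ i, b (i + n) = b i)
    (hb0 : ∀ k, b k ≠ 0) :
    ∀ k, ∏ i ∈ Finset.Ico (1 + k) ((1 + k) + n), b i = ∏ i ∈ Finset.Ico 1 (1 + n), b i := by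
  intro k
  induction k with
  | zero => rfl
  | succ k ih =>
    have e : 1 + (k + 1) = (1 + k) + 1 := by omega
    rw [e, ← prod_window b n hb hb0 (1 + k), ih]

lemma sum_shift (f : ℕ → ℝ) (n : ℕ) (hf : ∀ m, f (m + n) = f m) (hn : 0 < n) :
    ∀ d a, ∑ m ∈ Finset.Ico a (a + n), f m = ∑ m ∈ Finset.Ico (a + d) ((a + d) + n), f m := by
  have step : ∀ a, ∑ m ∈ Finset.Ico a (a + n), f m
      = ∑ m ∈ Finset.Ico (a + 1) ((a + 1) + n), f m := by
    intro a
    have e : (a + 1) + n = (a + n) + 1 := by omega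
    rw [e, Finset.sum_Ico_succ_top (by omega) f, hf,
      Finset.sum_eq_sum_Ico_succ_bot (by omega : a < a + n) f]
    ring
  intro d
  induction d with
  | zero => intro a; rfl
  | succ d ih =>
    intro a
    rw [step a]
    have := ih (a + 1)
    have e : (a + 1) + d = a + (d + 1) := by omega
    rwa [e] at this

lemma pair_sum (g : ℕ → ℝ) : ∀ h : ℕ,
    ∑ r ∈ Finset.range (2 * h), g r = ∑ r ∈ Finset.range h, (g (2 * r) + g (2 * r + 1)) := by
  intro h
  induction h with
  | zero => simp
  | succ h ih =>
    have e : 2 * (h + 1) = (2 * h + 1) + 1 := by omega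
    rw [e, Finset.sum_range_succ, Finset.sum_range_succ, Finset.sum_range_succ, ih]
    ring

end QposAux

open QposAux

/-- Let `h ≥ 1` and `b_1, …, b_{2h}` be real numbers with `0 < |b_k| < 1`,
extended periodically with period `2h`. If at most one index `k ∈ {1,…,2h}`
satisfies `b_k < 0`, then
`Q = h + Σ_{m=1}^{2h} Σ_{j=1}^{2h−1} (−1)^j Π_{i=m}^{m+j−1} b_i + h Π_{i=1}^{2h} b_i`
is strictly positive. -/
theorem Q_pos_at_most_one_negative
    (h : ℕ) (hh : 1 ≤ h) (b : ℕ → ℝ)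
    (hbper : ∀ i, b (i + 2 * h) = b i)
    (habs : ∀ k, 0 < |b k| ∧ |b k| < 1)
    (hneg : ((Finset.Icc 1 (2 * h)).filter fun k => b k < 0).card ≤ 1) :
    0 < (h : ℝ)
        + (∑ m ∈ Finset.Icc 1 (2 * h), ∑ j ∈ Finset.Icc 1 (2 * h - 1),
            (-1 : ℝ) ^ j * ∏ i ∈ Finset.Icc m (m + j - 1), b i)
        + (h : ℝ) * ∏ i ∈ Finset.Icc 1 (2 * h), b i := by
  classical
  have hb0 : ∀ k, b k ≠ 0 := fun k => abs_pos.mp (habs k).1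
  have hb1 : ∀ k, |b k| < 1 := fun k => (habs k).2
  -- choose the distinguished index K
  obtain ⟨K, hK1, hK2, huniq⟩ :
      ∃ K, 1 ≤ K ∧ K ≤ 2 * h ∧ ∀ j, 1 ≤ j → j ≤ 2 * h → b j < 0 → j = K := by
    by_cases hne : (((Finset.Icc 1 (2 * h)).filter fun k => b k < 0)).Nonempty
    · obtain ⟨K, hKmem⟩ := hne
      have hK := Finset.mem_filter.mp hKmem
      have hKIcc := Finset.mem_Icc.mp hK.1
      refine ⟨K, hKIcc.1, hKIcc.2, fun j h1 h2 hj => ?_⟩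
      exact Finset.card_le_one.mp hneg j
        (Finset.mem_filter.mpr ⟨Finset.mem_Icc.mpr ⟨h1, h2⟩, hj⟩) K hKmem
    · refine ⟨1, le_refl 1, by omega, fun j h1 h2 hj => absurd ?_ hne⟩
      exact ⟨j, Finset.mem_filter.mpr ⟨Finset.mem_Icc.mpr ⟨h1, h2⟩, hj⟩⟩
  -- any negative index is congruent to K mod 2h
  have hred : ∀ i, 1 ≤ i → b i < 0 → ∃ q, i = K + q * (2 * h) := by
    intro i hi hbi
    have h2h : 0 < 2 * h := by omega
    have hmd := Nat.mod_add_div (i - 1) (2 * h)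
    have hlt := Nat.mod_lt (i - 1) h2h
    set j := (i - 1) % (2 * h) + 1 with hj
    have hcomm : ((i - 1) / (2 * h)) * (2 * h) = (2 * h) * ((i - 1) / (2 * h)) :=
      Nat.mul_comm _ _
    have hji : j + ((i - 1) / (2 * h)) * (2 * h) = i := by omega
    have hbj : b j = b i := by rw [← hji, bper' b (2 * h) hbper]
    have hjK : j = K := huniq j (by omega) (by omega) (by rw [hbj]; exact hbi)
    exact ⟨(i - 1) / (2 * h), by omega⟩
  set B : ℝ := ∏ i ∈ Finset.Icc 1 (2 * h), b i with hBdef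
  have hBIco : B = ∏ i ∈ Finset.Ico 1 (1 + 2 * h), b i := by
    rw [hBdef, ← Finset.Ico_add_one_right_eq_Icc, show 2 * h + 1 = 1 + 2 * h from by omega]
  -- window products of length 2h all equal B
  have hwin : ∀ m, 1 ≤ m → ∏ i ∈ Finset.Ico m (m + 2 * h), b i = B := by
    intro m hm
    obtain ⟨k, rfl⟩ : ∃ k, m = 1 + k := ⟨m - 1, by omega⟩
    rw [prod_const b (2 * h) hbper hb0 k, hBIco]
  -- the key recurrence : T m = 1 - B - b m * T (m+1)
  have hrec : ∀ m, 1 ≤ m →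
      T b (2 * h) m = 1 - B - b m * T b (2 * h) (m + 1) := by
    intro m hm
    have h1 : T b (2 * h + 1) m = 1 - b m * T b (2 * h) (m + 1) := rfl
    have h2 : T b (2 * h + 1) m = T b (2 * h) m
        + (-1 : ℝ) ^ (2 * h) * ∏ i ∈ Finset.Ico m (m + 2 * h), b i := by
      rw [T_sum, T_sum, Finset.sum_range_succ]
    have h3 : (-1 : ℝ) ^ (2 * h) = 1 := by
      rw [pow_mul]; norm_num
    rw [h3, one_mul, hwin m hm] at h2
    linarith [h1, h2.symm]
  -- Step 1 : rewrite the inner double sum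
  have e1 : ∀ m ∈ Finset.Icc 1 (2 * h),
      ∑ j ∈ Finset.Icc 1 (2 * h - 1), (-1 : ℝ) ^ j * ∏ i ∈ Finset.Icc m (m + j - 1), b i
      = T b (2 * h) m - 1 := by
    intro m hm
    have hm1 : 1 ≤ m := (Finset.mem_Icc.mp hm).1
    have eI : Finset.Icc 1 (2 * h - 1) = Finset.Ico 1 (2 * h) := by
      rw [← Finset.Ico_add_one_right_eq_Icc, show 2 * h - 1 + 1 = 2 * h from by omega]
    have et : ∀ j ∈ Finset.Ico 1 (2 * h),
        (-1 : ℝ) ^ j * ∏ i ∈ Finset.Icc m (m + j - 1), b i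
        = (-1 : ℝ) ^ j * ∏ i ∈ Finset.Ico m (m + j), b i := by
      intro j hj
      have hj1 := (Finset.mem_Ico.mp hj).1
      congr 1
      rw [← Finset.Ico_add_one_right_eq_Icc, show m + j - 1 + 1 = m + j from by omega]
    rw [eI, Finset.sum_congr rfl et, T_sum, Finset.range_eq_Ico,
      Finset.sum_eq_sum_Ico_succ_bot (by omega : 0 < 2 * h)]
    simp
  -- Step 2 : shift and pair the outer sum
  have hTper : ∀ m, T b (2 * h) (m + 2 * h) = T b (2 * h) m :=
    fun m => T_per b (2 * h) hbper (2 * h) m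
  have e2 : ∑ m ∈ Finset.Icc 1 (2 * h), T b (2 * h) m
      = ∑ r ∈ Finset.range h, (T b (2 * h) (K + 1 + 2 * r) + T b (2 * h) (K + 2 + 2 * r)) := by
    have eIcc : Finset.Icc 1 (2 * h) = Finset.Ico 1 (1 + 2 * h) := by
      rw [← Finset.Ico_add_one_right_eq_Icc, show 2 * h + 1 = 1 + 2 * h from by omega]
    rw [eIcc, sum_shift (T b (2 * h)) (2 * h) hTper (by omega) K 1,
      Finset.sum_Ico_eq_sum_range]
    have ec : 1 + K + 2 * h - (1 + K) = 2 * h := by omega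
    rw [ec, pair_sum (fun r => T b (2 * h) (1 + K + r)) h]
    apply Finset.sum_congr rfl
    intro r _
    have ea : 1 + K + 2 * r = K + 1 + 2 * r := by omega
    have eb : 1 + K + (2 * r + 1) = K + 2 + 2 * r := by omega
    rw [ea, eb]
  -- Step 3 : the main algebraic identity
  have key : (h : ℝ)
        + (∑ m ∈ Finset.Icc 1 (2 * h), ∑ j ∈ Finset.Icc 1 (2 * h - 1),
            (-1 : ℝ) ^ j * ∏ i ∈ Finset.Icc m (m + j - 1), b i)
        + (h : ℝ) * B
      = ∑ r ∈ Finset.range h, (1 - b (K + 1 + 2 * r)) * T b (2 * h) (K + 2 + 2 * r) := by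
    rw [Finset.sum_congr rfl e1, Finset.sum_sub_distrib, Finset.sum_const, Nat.card_Icc, e2]
    have epair : ∀ r ∈ Finset.range h,
        T b (2 * h) (K + 1 + 2 * r) + T b (2 * h) (K + 2 + 2 * r)
        = (1 - B) + (1 - b (K + 1 + 2 * r)) * T b (2 * h) (K + 2 + 2 * r) := by
      intro r _
      have := hrec (K + 1 + 2 * r) (by omega)
      have e : K + 1 + 2 * r + 1 = K + 2 + 2 * r := by omega
      rw [e] at this
      rw [this]; ring
    rw [Finset.sum_congr rfl epair, Finset.sum_add_distrib, Finset.sum_const,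
      Finset.card_range]
    have ecard : (2 * h + 1 - 1) = 2 * h := by omega
    rw [ecard]
    simp only [nsmul_eq_mul]
    push_cast
    ring
  rw [key]
  -- Step 4 : positivity of each summand
  apply Finset.sum_pos
  · intro r hr
    have hrh : r < h := Finset.mem_range.mp hr
    have hblt : b (K + 1 + 2 * r) < 1 :=
      lt_of_le_of_lt (le_abs_self _) (hb1 _)
    apply mul_pos (by linarith)
    set M := K + 2 + 2 * r with hM
    set t := 2 * h - 2 - 2 * r with ht
    -- every window entry other than position t is positive
    have wother : ∀ r', r' < 2 * h - 1 → r' ≠ t → 0 < b (M + r') := by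
      intro r' hr' hrt
      rcases (hb0 (M + r')).lt_or_gt with hlt | hgt
      · exfalso
        obtain ⟨q, hq⟩ := hred (M + r') (by omega) hlt
        have hq' : 2 + 2 * r + r' = q * (2 * h) := by omega
        rcases q with _ | _ | q
        · omega
        · simp at hq'; omega
        · have : (q + 1 + 1) * (2 * h) = q * (2 * h) + 4 * h := by ring
          omega
      · exact hgt
    have hMt : M + t = K + 2 * h := by omega
    have hMtK : b (M + t) = b K := by rw [hMt, hbper]
    have h2heq : 2 * h = (2 * h - 1) + 1 := by omega
    rcases (hb0 K).lt_or_gt with hKneg | hKpos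
    · -- negative entry at even position t
      have hteven : Even t := ⟨h - 1 - r, by omega⟩
      have := (T_neg b hb1 (2 * h - 1) M t (by omega)
        (by rw [hMtK]; exact hKneg) wother).1 hteven
      rw [h2heq]
      exact this.1
    · -- all window entries positive
      have wall : ∀ r', r' < 2 * h - 1 → 0 < b (M + r') := by
        intro r' hr'
        by_cases hrt : r' = t
        · rw [hrt, hMtK]; exact hKpos
        · exact wother r' hr' hrt
      have := T_pos b hb1 (2 * h - 1) M wall
      rw [h2heq]
      exact this.1
  · exact Finset.nonempty_range_iff.mpr (by omega)
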